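/- Let R = ℝ[x,y,z] with graded reverse lexicographic order, and let I, J be homogeneous ideals with I generated by polynomials in x, z only and J generated by polynomials in y, z only, such that In(I + J) = In(I) + In(J). Then In(I ∩ J) = In(I) ∩ In(J). -/

import Mathlib

open MvPolynomial

/-- Graded reverse lexicographic order on exponent vectors in three variables
`x = X 0 > y = X 1 > z = X 2`. -/
def GrevlexLt (u v : Fin 3 →₀ ℕ) : Prop :=
  (u.sum fun _ n => n) < (v.sum fun _ n => n) ∨
    ((u.sum fun _ n => n) = (v.sum fun _ n => n) ∧
      ∃ i, v i < u i ∧ ∀ j, i < j → u j = v j)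

/-- `e` is the exponent of the grevlex-leading monomial of `f`. -/
def IsLeadExp (f : MvPolynomial (Fin 3) ℝ) (e : Fin 3 →₀ ℕ) : Prop :=
  e ∈ f.support ∧ ∀ e' ∈ f.support, e' ≠ e → GrevlexLt e' e

/-- The initial ideal of `I` with respect to graded reverse lexicographic order. -/
noncomputable def initialIdeal (I : Ideal (MvPolynomial (Fin 3) ℝ)) :
    Ideal (MvPolynomial (Fin 3) ℝ) :=
  Ideal.span {M | ∃ f ∈ I, ∃ e, IsLeadExp f e ∧ M = monomial e 1}

namespace GrevlexAux

abbrev E3 := Fin 3 →₀ ℕ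

def deg3 (u : E3) : ℕ := u 0 + u 1 + u 2

lemma sum_eq_deg3 (u : E3) : (u.sum fun _ n => n) = deg3 u := by
  rw [Finsupp.sum_fintype _ _ (fun _ => rfl)]
  simp [Fin.sum_univ_three, deg3]

lemma grevlexLt_iff (u v : E3) :
    GrevlexLt u v ↔ deg3 u < deg3 v ∨ (deg3 u = deg3 v ∧
      (v 2 < u 2 ∨ (u 2 = v 2 ∧ (v 1 < u 1 ∨ (u 1 = v 1 ∧ v 0 < u 0))))) := by
  unfold GrevlexLt
  rw [sum_eq_deg3, sum_eq_deg3]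
  constructor
  · rintro (h | ⟨hd, i, hi, hj⟩)
    · exact Or.inl h
    · refine Or.inr ⟨hd, ?_⟩
      have hi3 : i = 0 ∨ i = 1 ∨ i = 2 := by fin_cases i <;> simp
      rcases hi3 with rfl | rfl | rfl
      · have h1 := hj 1 (by decide)
        have h2 := hj 2 (by decide)
        omega
      · have h2 := hj 2 (by decide)
        omega
      · omega
  · rintro (h | ⟨hd, h | ⟨h2, h | ⟨h1, h0⟩⟩⟩)
    · exact Or.inl h
    · exact Or.inr ⟨hd, 2, h, by intro j hj; exact absurd hj (by fin_cases j <;> decide)⟩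
    · refine Or.inr ⟨hd, 1, h, ?_⟩
      intro j hj
      fin_cases j
      · exact absurd hj (by decide)
      · exact absurd hj (by decide)
      · exact h2
    · refine Or.inr ⟨hd, 0, h0, ?_⟩
      intro j hj
      fin_cases j
      · exact absurd hj (by decide)
      · exact h1
      · exact h2

/-- Key map into a lexicographic product. -/
def kf (u : E3) : ℕ ×ₗ (ℕ ×ₗ (ℕ ×ₗ ℕ)) :=
  toLex (deg3 u, toLex (deg3 u - u 2, toLex (deg3 u - u 1, deg3 u - u 0)))

lemma grevlexLt_iff_kf {u v : E3} : GrevlexLt u v ↔ kf u < kf v := by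
  rw [grevlexLt_iff]
  simp only [kf, Prod.Lex.lt_iff, ofLex_toLex, deg3]
  omega

lemma kf_inj {u v : E3} (h : kf u = kf v) : u = v := by
  simp only [kf, toLex_inj, Prod.mk.injEq, deg3] at h
  ext i
  have hi3 : i = 0 ∨ i = 1 ∨ i = 2 := by fin_cases i <;> simp
  rcases hi3 with rfl | rfl | rfl <;> omega

lemma grevlex_trichot {u v : E3} (h : u ≠ v) : GrevlexLt u v ∨ GrevlexLt v u := by
  rcases lt_or_gt_of_ne (fun hk => h (kf_inj hk)) with h' | h'
  · exact Or.inl (grevlexLt_iff_kf.mpr h')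
  · exact Or.inr (grevlexLt_iff_kf.mpr h')
lemma grevlex_trans {u v w : E3} (h1 : GrevlexLt u v) (h2 : GrevlexLt v w) : GrevlexLt u w :=
  grevlexLt_iff_kf.mpr (lt_trans (grevlexLt_iff_kf.mp h1) (grevlexLt_iff_kf.mp h2))

lemma grevlex_irrefl (u : E3) : ¬ GrevlexLt u u := fun h => lt_irrefl _ (grevlexLt_iff_kf.mp h)

lemma grevlex_asymm {u v : E3} (h : GrevlexLt u v) : ¬ GrevlexLt v u :=
  fun h' => grevlex_irrefl u (grevlex_trans h h')

lemma grevlex_wf : WellFounded GrevlexLt :=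
  Subrelation.wf (fun h => grevlexLt_iff_kf.mp h) (InvImage.wf kf wellFounded_lt)

lemma grevlex_add_right {u v : E3} (w : E3) (h : GrevlexLt u v) : GrevlexLt (w + u) (w + v) := by
  rw [grevlexLt_iff] at h ⊢
  simp only [Finsupp.add_apply, deg3] at *
  omega

abbrev R3 := MvPolynomial (Fin 3) ℝ

lemma isLeadExp_unique {f : R3} {e e' : E3} (h : IsLeadExp f e) (h' : IsLeadExp f e') :
    e = e' := by
  by_contra hne
  exact grevlex_asymm (h.2 e' h'.1 (Ne.symm hne)) (h'.2 e h.1 hne)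

lemma exists_isLeadExp {f : R3} (hf : f ≠ 0) : ∃ e, IsLeadExp f e := by
  obtain ⟨e, he, hmax⟩ := Finset.exists_max_image f.support kf
    (Finset.nonempty_iff_ne_empty.mpr (mt MvPolynomial.support_eq_empty.mp hf))
  refine ⟨e, he, fun e' he' hne => ?_⟩
  exact grevlexLt_iff_kf.mpr (lt_of_le_of_ne (hmax e' he') (fun hk => hne (kf_inj hk)))

lemma ne_zero_of_isLeadExp {f : R3} {e : E3} (h : IsLeadExp f e) : f ≠ 0 := by
  intro h0; rw [h0] at h; exact absurd h.1 (by simp)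

/-- membership in support of `monomial a 1 * f`. -/
lemma mem_support_monomial_mul {a : E3} {f : R3} {u : E3} :
    u ∈ (monomial a (1:ℝ) * f).support ↔ ∃ d ∈ f.support, u = a + d := by
  rw [mem_support_iff, coeff_monomial_mul']
  constructor
  · intro h
    split_ifs at h with hle
    · refine ⟨u - a, ?_, ?_⟩
      · rw [mem_support_iff]; intro h0; rw [h0, mul_zero] at h; exact h rfl
      · rw [add_tsub_cancel_of_le hle]
    · exact absurd rfl h
  · rintro ⟨d, hd, rfl⟩
    rw [if_pos le_self_add, add_tsub_cancel_left, one_mul]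
    exact mem_support_iff.mp hd

lemma isLeadExp_monomial_mul {f : R3} {e : E3} (a : E3) (hf : IsLeadExp f e) :
    IsLeadExp (monomial a (1:ℝ) * f) (a + e) := by
  constructor
  · exact mem_support_monomial_mul.mpr ⟨e, hf.1, rfl⟩
  · intro u hu hne
    obtain ⟨d, hd, rfl⟩ := mem_support_monomial_mul.mp hu
    exact grevlex_add_right a (hf.2 d hd (fun h => hne (by rw [h])))

def leadSet (I : Ideal R3) : Set E3 := {e | ∃ f ∈ I, IsLeadExp f e}

lemma initialIdeal_eq (I : Ideal R3) :
    initialIdeal I = Ideal.span ((fun e => monomial e (1:ℝ)) '' leadSet I) := by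
  unfold initialIdeal
  congr 1
  ext M
  constructor
  · rintro ⟨f, hf, e, he, rfl⟩; exact ⟨e, ⟨f, hf, he⟩, rfl⟩
  · rintro ⟨e, ⟨f, hf, he⟩, rfl⟩; exact ⟨f, hf, e, he, rfl⟩

/-- If `p` lies in the span of a set of monic monomials, every exponent in the
support of `p` is divisible by some generator exponent. -/
lemma exp_divisible_of_mem_span {S : Set E3} {p : R3}
    (hp : p ∈ Ideal.span ((fun e => monomial e (1:ℝ)) '' S)) {e : E3} (he : e ∈ p.support) :
    ∃ a : E3, ∃ e' ∈ S, e = a + e' := by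
  classical
  obtain ⟨c, hcs, hsum⟩ := Submodule.mem_span_set.mp hp
  rw [Finsupp.sum] at hsum
  subst hsum
  have := MvPolynomial.support_sum he
  rw [Finset.mem_biUnion] at this
  obtain ⟨m, hm, hem⟩ := this
  obtain ⟨e', he', hms⟩ := hcs hm
  rw [smul_eq_mul] at hem
  have hsub := MvPolynomial.support_mul (c m) m hem
  rw [← hms] at hsub
  rw [support_monomial, if_neg (one_ne_zero)] at hsub
  rw [Finset.mem_add] at hsub
  obtain ⟨a, ha, b, hb, hab⟩ := hsub
  rw [Finset.mem_singleton] at hb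
  exact ⟨a, b, hb ▸ he', hab.symm⟩

lemma lead_mem_initialIdeal {I : Ideal R3} {f : R3} {e : E3} (hf : f ∈ I)
    (he : IsLeadExp f e) : monomial e (1:ℝ) ∈ initialIdeal I :=
  Ideal.subset_span ⟨f, hf, e, he, rfl⟩

lemma mem_self_support {e : E3} : e ∈ (monomial e (1:ℝ)).support := by
  rw [support_monomial, if_neg one_ne_zero]; exact Finset.mem_singleton_self e

lemma monomial_mem_initialIdeal_iff {I : Ideal R3} {e : E3} :
    monomial e (1:ℝ) ∈ initialIdeal I ↔ ∃ f ∈ I, IsLeadExp f e := by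
  constructor
  · intro h
    rw [initialIdeal_eq] at h
    obtain ⟨a, e', ⟨f, hf, hfe⟩, rfl⟩ := exp_divisible_of_mem_span h mem_self_support
    exact ⟨monomial a 1 * f, Ideal.mul_mem_left I _ hf, isLeadExp_monomial_mul a hfe⟩
  · rintro ⟨f, hf, he⟩
    exact lead_mem_initialIdeal hf he

lemma monomial_mem_sum {I J : Ideal R3} {e : E3}
    (h : monomial e (1:ℝ) ∈ initialIdeal I + initialIdeal J) :
    monomial e (1:ℝ) ∈ initialIdeal I ∨ monomial e (1:ℝ) ∈ initialIdeal J := by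
  rw [initialIdeal_eq, initialIdeal_eq, Submodule.add_eq_sup, ← Ideal.span_union,
    ← Set.image_union] at h
  obtain ⟨a, e', he', rfl⟩ := exp_divisible_of_mem_span h mem_self_support
  rcases he' with ⟨f, hf, hfe⟩ | ⟨f, hf, hfe⟩
  · exact Or.inl (monomial_mem_initialIdeal_iff.mpr
      ⟨monomial a 1 * f, Ideal.mul_mem_left I _ hf, isLeadExp_monomial_mul a hfe⟩)
  · exact Or.inr (monomial_mem_initialIdeal_iff.mpr
      ⟨monomial a 1 * f, Ideal.mul_mem_left J _ hf, isLeadExp_monomial_mul a hfe⟩)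

/-- Cancellation: subtracting the properly scaled polynomial with the same lead
exponent yields zero or something with strictly smaller lead exponent. -/
lemma cancel_lemma {p q : R3} {e : E3} (hp : IsLeadExp p e) (hq : IsLeadExp q e) :
    p - (coeff e p / coeff e q) • q = 0 ∨
      ∃ e', IsLeadExp (p - (coeff e p / coeff e q) • q) e' ∧ GrevlexLt e' e := by
  set c := coeff e p / coeff e q with hc
  set d := p - c • q with hd
  by_cases h0 : d = 0
  · exact Or.inl h0
  refine Or.inr ?_
  obtain ⟨e', he'⟩ := exists_isLeadExp h0
  refine ⟨e', he', ?_⟩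
  have hqe : coeff e q ≠ 0 := mem_support_iff.mp hq.1
  have hcoeff : coeff e d = 0 := by
    rw [hd, coeff_sub, coeff_smul, hc, smul_eq_mul, div_mul_cancel₀ _ hqe, sub_self]
  have hene : e' ≠ e := by
    intro h; rw [h] at he'; exact mem_support_iff.mp he'.1 hcoeff
  have he'mem : e' ∈ p.support ∨ e' ∈ q.support := by
    by_contra hcon
    push_neg at hcon
    have h1 := notMem_support_iff.mp hcon.1
    have h2 := notMem_support_iff.mp hcon.2
    have : coeff e' d = 0 := by rw [hd, coeff_sub, coeff_smul, h1, h2, smul_zero, sub_zero]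
    exact mem_support_iff.mp he'.1 this
  rcases he'mem with hm | hm
  · exact hp.2 e' hm hene
  · exact hq.2 e' hm hene

/-- Perturbing by a polynomial with strictly smaller lead exponent preserves the lead. -/
lemma isLeadExp_sub_smul {p q : R3} {e0 e : E3} (hp : IsLeadExp p e0) (hq : IsLeadExp q e)
    (hlt : GrevlexLt e e0) (c : ℝ) : IsLeadExp (p - c • q) e0 := by
  have hq0 : ∀ u ∈ q.support, GrevlexLt u e0 := by
    intro u hu
    by_cases hue : u = e
    · rw [hue]; exact hlt
    · exact grevlex_trans (hq.2 u hu hue) hlt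
  have hqe0 : coeff e0 q = 0 := by
    by_contra h
    exact grevlex_irrefl e0 (hq0 e0 (mem_support_iff.mpr h))
  have hco : coeff e0 (p - c • q) = coeff e0 p := by
    rw [coeff_sub, coeff_smul, hqe0, smul_zero, sub_zero]
  constructor
  · rw [mem_support_iff, hco]; exact mem_support_iff.mp hp.1
  · intro u hu hne
    have : coeff u p ≠ 0 ∨ coeff u q ≠ 0 := by
      by_contra hcon
      push_neg at hcon
      have : coeff u (p - c • q) = 0 := by
        rw [coeff_sub, coeff_smul, hcon.1, hcon.2, smul_zero, sub_zero]
      exact mem_support_iff.mp hu this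
    rcases this with h | h
    · exact hp.2 u (mem_support_iff.mpr h) hne
    · exact hq0 u (mem_support_iff.mpr h)

lemma smul_mem_ideal {I : Ideal R3} {q : R3} (c : ℝ) (hq : q ∈ I) : c • q ∈ I := by
  rw [MvPolynomial.smul_eq_C_mul]
  exact Ideal.mul_mem_left I _ hq

/-- The key descent lemma. -/
lemma descent (I J : Ideal R3)
    (hsum : initialIdeal (I + J) = initialIdeal I + initialIdeal J) (e0 : E3) :
    ∀ e, GrevlexLt e e0 → ∀ f g : R3, f ∈ I → g ∈ J → IsLeadExp f e0 →
      IsLeadExp (f - g) e → ∃ h, h ∈ I ⊓ J ∧ IsLeadExp h e0 := by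
  refine fun e => grevlex_wf.induction
    (C := fun e => GrevlexLt e e0 → ∀ f g : R3, f ∈ I → g ∈ J → IsLeadExp f e0 →
      IsLeadExp (f - g) e → ∃ h, h ∈ I ⊓ J ∧ IsLeadExp h e0) e ?_
  intro e ih hlt f g hf hg hfl hdl
  have hdIJ : f - g ∈ I + J := by
    rw [Submodule.add_eq_sup]
    exact Submodule.sub_mem _ (Submodule.mem_sup_left hf) (Submodule.mem_sup_right hg)
  have hm : monomial e (1:ℝ) ∈ initialIdeal I + initialIdeal J := by
    rw [← hsum]; exact lead_mem_initialIdeal hdIJ hdl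
  rcases monomial_mem_sum hm with hmI | hmJ
  · obtain ⟨h0, hh0I, hh0e⟩ := monomial_mem_initialIdeal_iff.mp hmI
    set c := coeff e (f - g) / coeff e h0 with hc
    have hf2 : f - c • h0 ∈ I := Ideal.sub_mem I hf (smul_mem_ideal c hh0I)
    have hfl2 : IsLeadExp (f - c • h0) e0 := isLeadExp_sub_smul hfl hh0e hlt c
    have heq : f - c • h0 - g = f - g - c • h0 := by ring
    rcases cancel_lemma hdl hh0e with hz | ⟨e', he', hlt'⟩
    · have hfg : f - c • h0 = g := by
        rw [← sub_eq_zero, heq]; exact hz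
      exact ⟨g, ⟨hfg ▸ hf2, hg⟩, hfg ▸ hfl2⟩
    · exact ih e' hlt' (grevlex_trans hlt' hlt) (f - c • h0) g hf2 hg hfl2
        (by rw [heq]; exact he')
  · obtain ⟨h0, hh0J, hh0e⟩ := monomial_mem_initialIdeal_iff.mp hmJ
    set c := coeff e (f - g) / coeff e h0 with hc
    have hg2 : g + c • h0 ∈ J := Ideal.add_mem J hg (smul_mem_ideal c hh0J)
    have heq : f - (g + c • h0) = f - g - c • h0 := by ring
    rcases cancel_lemma hdl hh0e with hz | ⟨e', he', hlt'⟩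
    · have hfg : f = g + c • h0 := by
        rw [← sub_eq_zero, heq]; exact hz
      exact ⟨f, ⟨hf, hfg ▸ hg2⟩, hfl⟩
    · exact ih e' hlt' (grevlex_trans hlt' hlt) f (g + c • h0) hf hg2 hfl
        (by rw [heq]; exact he')

lemma monomial_mem_inf {I J : Ideal R3}
    (hsum : initialIdeal (I + J) = initialIdeal I + initialIdeal J) {e0 : E3}
    (h1 : monomial e0 (1:ℝ) ∈ initialIdeal I) (h2 : monomial e0 (1:ℝ) ∈ initialIdeal J) :
    monomial e0 (1:ℝ) ∈ initialIdeal (I ⊓ J) := by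
  obtain ⟨f, hf, hfe⟩ := monomial_mem_initialIdeal_iff.mp h1
  obtain ⟨g, hg, hge⟩ := monomial_mem_initialIdeal_iff.mp h2
  set c := coeff e0 f / coeff e0 g with hc
  have hcg : c • g ∈ J := smul_mem_ideal c hg
  have hcge : IsLeadExp (c • g) e0 := by
    have hc0 : c ≠ 0 := div_ne_zero (mem_support_iff.mp hfe.1) (mem_support_iff.mp hge.1)
    constructor
    · rw [mem_support_iff, coeff_smul, smul_eq_mul]
      exact mul_ne_zero hc0 (mem_support_iff.mp hge.1)
    · intro u hu hne
      refine hge.2 u ?_ hne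
      rw [mem_support_iff] at hu ⊢
      intro h0
      rw [coeff_smul, h0, smul_zero] at hu
      exact hu rfl
  rcases cancel_lemma hfe hge with hz | ⟨e, he, hlt⟩
  · have hfg : f = c • g := by rwa [← hc, sub_eq_zero] at hz
    exact lead_mem_initialIdeal (Submodule.mem_inf.mpr ⟨hf, hfg ▸ hcg⟩) hfe
  · rw [← hc] at he
    obtain ⟨h, hmem, hlead⟩ := descent I J hsum e0 e hlt f (c • g) hf hcg hfe he
    exact lead_mem_initialIdeal hmem hlead

lemma monomial_mem_of_mem_span {S : Set E3} {p : R3}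
    (hp : p ∈ Ideal.span ((fun e => monomial e (1:ℝ)) '' S)) {e : E3} (he : e ∈ p.support) :
    monomial e (1:ℝ) ∈ Ideal.span ((fun e => monomial e (1:ℝ)) '' S) := by
  obtain ⟨a, e', he', rfl⟩ := exp_divisible_of_mem_span hp he
  have : monomial (a + e') (1:ℝ) = monomial a 1 * monomial e' 1 := by
    rw [monomial_mul, one_mul]
  rw [this]
  exact Ideal.mul_mem_left _ _ (Ideal.subset_span ⟨e', he', rfl⟩)

end GrevlexAux

open GrevlexAux in
/-- Lemma `intersectiondescription`: if `I` is a homogeneous ideal generated by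
polynomials in `x, z` only, `J` is a homogeneous ideal generated by polynomials in
`y, z` only, and `In(I + J) = In(I) + In(J)`, then `In(I ∩ J) = In(I) ∩ In(J)`. -/
theorem initial_of_intersection (I J : Ideal (MvPolynomial (Fin 3) ℝ))
    (hI : ∃ S : Set (MvPolynomial (Fin 3) ℝ), I = Ideal.span S ∧
      ∀ f ∈ S, (∃ n, f.IsHomogeneous n) ∧ ∀ e ∈ f.support, e 1 = 0)
    (hJ : ∃ S : Set (MvPolynomial (Fin 3) ℝ), J = Ideal.span S ∧
      ∀ f ∈ S, (∃ n, f.IsHomogeneous n) ∧ ∀ e ∈ f.support, e 0 = 0)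
    (hsum : initialIdeal (I + J) = initialIdeal I + initialIdeal J) :
    initialIdeal (I ⊓ J) = initialIdeal I ⊓ initialIdeal J := by
  apply le_antisymm
  · refine le_inf ?_ ?_ <;> unfold initialIdeal <;> apply Ideal.span_mono <;>
      rintro M ⟨f, hfm, e, he, rfl⟩
    · exact ⟨f, hfm.1, e, he, rfl⟩
    · exact ⟨f, hfm.2, e, he, rfl⟩
  · intro p hp
    obtain ⟨hp1, hp2⟩ := Submodule.mem_inf.mp hp
    have hmono : ∀ e ∈ p.support, monomial e (1:ℝ) ∈ initialIdeal (I ⊓ J) := by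
      intro e he
      have m1 : monomial e (1:ℝ) ∈ initialIdeal I := by
        rw [initialIdeal_eq] at hp1 ⊢
        exact monomial_mem_of_mem_span hp1 he
      have m2 : monomial e (1:ℝ) ∈ initialIdeal J := by
        rw [initialIdeal_eq] at hp2 ⊢
        exact monomial_mem_of_mem_span hp2 he
      exact monomial_mem_inf hsum m1 m2
    have hrep : p = ∑ v ∈ p.support, monomial v (coeff v p) := as_sum p
    rw [hrep]
    apply Submodule.sum_mem
    intro v hv
    have : monomial v (coeff v p) = C (coeff v p) * monomial v (1:ℝ) := by
      rw [C_mul_monomial, mul_one]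
    rw [this]
    exact Ideal.mul_mem_left _ _ (hmono v hv)
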